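/- Let A be a commutative ring and J a finitely generated ideal of A. Then the completion of J (with respect to the topology induced from the J-adic topology of A) equals Â·J, and for every n ≥ 0 the completion of J^n equals (Ĵ)^n, where Â denotes the J-adic completion of A. -/

import Mathlib

/-!
STATEMENT 1: Let `A` be a commutative ring and `J` a finitely generated ideal of `A`.
Then the completion of `J` (with respect to the topology induced from the `J`-adic
topology of `A`), i.e. the closure `Ĵ` of the image of `J` in the `J`-adic completion
`Â`, equals `Â·J`; and for every `n ≥ 0` the completion of `J^n` equals `Ĵ^n`.
-/

open AdicCompletion

variable {A : Type*} [CommRing A]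

/-- The completion of an ideal `K ⊆ A` with respect to the subspace filtration
induced from the `J`-adic topology of `A`, realized as the closure of the image of
`K` inside the `J`-adic completion `Â = lim A/J^n`: it consists of those elements
whose `n`-th component lies in the image of `K` in `A/J^n` for every `n`. -/
def idealCompletion (J K : Ideal A) : Ideal (AdicCompletion J A) where
  carrier := {x | ∀ n : ℕ,
    x.val n ∈ Submodule.map (Submodule.mkQ (J ^ n • ⊤ : Submodule A A)) (K : Submodule A A)}
  zero_mem' := fun n => by
    simp only [AdicCompletion.val_zero]
    exact Submodule.zero_mem _
  add_mem' := fun {x y} hx hy n => by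
    rw [AdicCompletion.val_add]
    exact Submodule.add_mem _ (hx n) (hy n)
  smul_mem' := fun c x hx n => by
    obtain ⟨k, hkK, hk⟩ := Submodule.mem_map.mp (hx n)
    obtain ⟨a, ha⟩ := Submodule.mkQ_surjective (J ^ n • ⊤ : Submodule A A) (c.val n)
    have hval : (c • x).val n = c.val n • x.val n := rfl
    show (c • x).val n ∈ _
    rw [hval, ← ha, ← hk]
    refine ⟨a • k, K.smul_mem a hkK, ?_⟩
    rfl

lemma mem_idealCompletion_iff (J K : Ideal A) (x : AdicCompletion J A) :
    x ∈ idealCompletion J K ↔ ∀ n : ℕ,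
      x.val n ∈ Submodule.map (Submodule.mkQ (J ^ n • ⊤ : Submodule A A)) (K : Submodule A A) :=
  Iff.rfl

lemma smul_top_eq (J : Ideal A) (n : ℕ) : (J ^ n • ⊤ : Submodule A A) = J ^ n := by
  rw [smul_eq_mul, Ideal.mul_top]

lemma idealCompletion_pow_eq (J : Ideal A) (hJ : J.FG) (m : ℕ) :
    idealCompletion J (J ^ m) = (J ^ m).map (algebraMap A (AdicCompletion J A)) := by
  apply le_antisymm
  · intro x hx
    rw [mem_idealCompletion_iff] at hx
    obtain ⟨s, hs⟩ := Submodule.FG.pow hJ m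
    have hchoice : ∀ n : ℕ, ∃ k : A, k ∈ J ^ m ∧
        Submodule.mkQ (J ^ n • ⊤ : Submodule A A) k = x.val n := fun n => by
      obtain ⟨k, hk, hk2⟩ := hx n; exact ⟨k, hk, hk2⟩
    choose k hk hk2 using hchoice
    set f : (↥s) → A := fun j => (j : A) with hf
    have hspan : Submodule.span A (Set.range f) = J ^ m := by
      rw [← hs]
      congr 1
      ext a
      simp [hf]
    have hkq : ∀ n : ℕ, x.val n =
        Submodule.mkQ (J ^ n • ⊤ : Submodule A A) (k (m + n)) := by
      intro n
      calc x.val n = transitionMap J A (Nat.le_add_left n m) (x.val (m + n)) :=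
            (x.property _).symm
        _ = transitionMap J A (Nat.le_add_left n m)
              (Submodule.Quotient.mk (k (m + n))) := by rw [← hk2 (m + n)]; rfl
        _ = Submodule.Quotient.mk (k (m + n)) := rfl
    have hdiff : ∀ n : ℕ, k (m + n + 1) - k (m + n) ∈
        J ^ n • Submodule.span A (Set.range f) := by
      intro n
      have h1 : (Submodule.Quotient.mk (k (m + n + 1)) :
          A ⧸ (J ^ (m + n) • ⊤ : Submodule A A)) = Submodule.Quotient.mk (k (m + n)) := by
        calc (Submodule.Quotient.mk (k (m + n + 1)) :
              A ⧸ (J ^ (m + n) • ⊤ : Submodule A A))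
            = transitionMap J A (Nat.le_succ (m + n))
              (Submodule.Quotient.mk (k (m + n + 1))) := rfl
          _ = transitionMap J A (Nat.le_succ (m + n)) (x.val (m + n + 1)) := by
              rw [← hk2 (m + n + 1)]; rfl
          _ = x.val (m + n) := x.property _
          _ = Submodule.Quotient.mk (k (m + n)) := by rw [← hk2 (m + n)]; rfl
      have h2 := (Submodule.Quotient.eq _).mp h1
      rw [smul_top_eq] at h2
      rw [hspan, smul_eq_mul, ← pow_add]
      have hnm : n + m = m + n := by omega
      rw [hnm]
      exact h2
    choose c hc1 hc2 using fun n =>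
      (Submodule.mem_ideal_smul_span_iff_exists_sum (J ^ n) f _).mp (hdiff n)
    have hbase : k m ∈ (⊤ : Ideal A) • Submodule.span A (Set.range f) := by
      rw [Submodule.top_smul, hspan]; exact hk m
    obtain ⟨c₀, -, hc₀⟩ :=
      (Submodule.mem_ideal_smul_span_iff_exists_sum (⊤ : Ideal A) f (k m)).mp hbase
    set g : ℕ → (↥s →₀ A) := fun n => Nat.rec c₀ (fun n gn => gn + c n) n with hg
    have hgsucc : ∀ n, g (n + 1) = g n + c n := fun n => rfl
    have hgsum : ∀ n, ((g n).sum fun i a => a • f i) = k (m + n) := by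
      intro n
      induction n with
      | zero => exact hc₀
      | succ n ih =>
        rw [hgsucc n, Finsupp.sum_add_index' (fun i => zero_smul A (f i))
          (fun i a b => add_smul a b (f i)), ih, hc2 n]
        have : m + (n + 1) = m + n + 1 := rfl
        rw [this]
        abel
    have hcauchy : ∀ j : ↥s, ∀ n : ℕ,
        g n j ≡ g (n + 1) j [SMOD (J ^ n • ⊤ : Submodule A A)] := by
      intro j n
      rw [SModEq.sub_mem, hgsucc n, smul_top_eq]
      simpa using (J ^ n).neg_mem (hc1 n j)
    set seq : ↥s → AdicCauchySequence J A :=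
      fun j => AdicCauchySequence.mk J A (fun n => g n j) (hcauchy j) with hseq
    have hx_eq : x = ∑ j : ↥s,
        AdicCompletion.mk J A (seq j) * algebraMap A (AdicCompletion J A) (f j) := by
      apply Subtype.ext
      funext n
      have hval : (∑ j : ↥s,
          AdicCompletion.mk J A (seq j) * algebraMap A (AdicCompletion J A) (f j)).val n
          = ∑ j : ↥s, (AdicCompletion.mk J A (seq j)
              * algebraMap A (AdicCompletion J A) (f j)).val n := by
        rw [← eval_apply]
        rw [map_sum]
        rfl
      show x.val n = _
      rw [hval, hkq n, ← hgsum n]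
      have hterm : ∀ j : ↥s, (AdicCompletion.mk J A (seq j)
          * algebraMap A (AdicCompletion J A) (f j)).val n
          = Submodule.mkQ (J ^ n • ⊤ : Submodule A A) (g n j * f j) := fun j => rfl
      simp only [hterm]
      rw [← map_sum]
      congr 1
      rw [Finsupp.sum_fintype _ _ (fun i => zero_smul A (f i))]
      rfl
    rw [hx_eq]
    apply Ideal.sum_mem
    intro j _
    apply Ideal.mul_mem_left
    apply Ideal.mem_map_of_mem
    rw [← hs]
    exact Ideal.subset_span j.property
  · rw [Ideal.map_le_iff_le_comap]
    intro a ha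
    rw [Ideal.mem_comap, mem_idealCompletion_iff]
    intro n
    exact ⟨a, ha, rfl⟩

theorem idealCompletion_eq_map_and_pow (J : Ideal A) (hJ : J.FG) :
    idealCompletion J J = J.map (algebraMap A (AdicCompletion J A)) ∧
      ∀ n : ℕ, idealCompletion J (J ^ n) = (idealCompletion J J) ^ n := by
  have h1 : idealCompletion J J = J.map (algebraMap A (AdicCompletion J A)) := by
    have := idealCompletion_pow_eq J hJ 1
    rwa [pow_one] at this
  refine ⟨h1, fun n => ?_⟩
  rw [idealCompletion_pow_eq J hJ n, Ideal.map_pow, h1]
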